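/- Define τ1, τ2 : [0,1] → [0,1] by: τ1(x) = 2x on [0, 1/10], τ1(x) = 8x − 3/5 on (1/10, 1/5), τ2(x) = 8x on [0, 1/10], τ2(x) = 2x + 3/5 on (1/10, 1/5), and, for both k = 1,2, τ_k(x) = 5x − 1 on [1/5, 2/5), 5x − 2 on [2/5, 3/5), 5x − 3 on [3/5, 4/5), 5x − 4 on [4/5, 1] (i.e. τ_k(x) = 5x mod 1 on [1/5,1]). Let p : [0,1] → [0,1] be any Borel measurable function with p(x) = 1/5 for x ∈ [0, 1/10) and p(x) = 4/5 for x ∈ [1/10, 1/5] (p arbitrary on (1/5, 1]). Then Lebesgue measure λ_Leb on [0,1] is invariant under the position-dependent random map R = {τ1, τ2; p, 1−p}; consequently the random map on the boundary maps has the same invariant density f ≡ 1 as the selector 𝝉(x) = 5x mod 1. -/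

import Mathlib

open MeasureTheory Set Filter
open scoped ENNReal

/-- Lebesgue measure restricted to the unit interval `[0,1]`. -/
noncomputable def leb01 : Measure ℝ := volume.restrict (Set.Icc (0:ℝ) 1)

/-- Invariance of a measure `μ` under the position dependent random map
`R = {τ1, τ2; p, 1-p}`. -/
def RMInvariant (τ1 τ2 p : ℝ → ℝ) (μ : Measure ℝ) : Prop :=
  ∀ A : Set ℝ, MeasurableSet A →
    μ A = ∫⁻ x, (ENNReal.ofReal (p x) * A.indicator (fun _ => (1:ℝ≥0∞)) (τ1 x)
      + ENNReal.ofReal (1 - p x) * A.indicator (fun _ => (1:ℝ≥0∞)) (τ2 x)) ∂μ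

/-- The map `x ↦ 5x mod 1` on `[1/5, 1]`, written with explicit branches. -/
noncomputable def fiveXmod1 : ℝ → ℝ := fun x =>
  if x < 2/5 then 5*x - 1 else if x < 3/5 then 5*x - 2
  else if x < 4/5 then 5*x - 3 else 5*x - 4

/-- Lower boundary map of Example 2 of the paper. -/
noncomputable def tauLower : ℝ → ℝ := fun x =>
  if x ≤ 1/10 then 2*x else if x < 1/5 then 8*x - 3/5 else fiveXmod1 x

/-- Upper boundary map of Example 2 of the paper. -/
noncomputable def tauUpper : ℝ → ℝ := fun x =>
  if x ≤ 1/10 then 8*x else if x < 1/5 then 2*x + 3/5 else fiveXmod1 x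

lemma lint_affine {A : Set ℝ} (hA : MeasurableSet A) (a b c d : ℝ) (ha : 0 < a) :
    ∫⁻ x in Set.Ico c d, A.indicator (fun _ => (1:ℝ≥0∞)) (a * x + b) ∂volume
      = ENNReal.ofReal a⁻¹ * volume (A ∩ Set.Ico (a*c+b) (a*d+b)) := by
  have hφ : Measurable fun x : ℝ => a * x + b := by fun_prop
  have h1 : ∀ x, A.indicator (fun _ => (1:ℝ≥0∞)) (a * x + b)
      = ((fun x : ℝ => a * x + b) ⁻¹' A).indicator (fun _ => (1:ℝ≥0∞)) x := fun x => by
    by_cases h : a * x + b ∈ A <;> simp [Set.indicator, h, Set.mem_preimage]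
  simp_rw [h1]
  show (∫⁻ x in Set.Ico c d, ((fun x : ℝ => a * x + b) ⁻¹' A).indicator 1 x ∂volume) = _
  rw [lintegral_indicator_one (hφ hA), Measure.restrict_apply (hφ hA)]
  have h2 : (fun x : ℝ => a * x + b) ⁻¹' A ∩ Set.Ico c d
      = (fun x : ℝ => a * x + b) ⁻¹' (A ∩ Set.Ico (a*c+b) (a*d+b)) := by
    rw [Set.preimage_inter]
    congr 1
    ext x
    simp only [Set.mem_preimage, Set.mem_Ico]
    constructor
    · rintro ⟨h₁, h₂⟩
      exact ⟨by nlinarith, by nlinarith⟩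
    · rintro ⟨h₁, h₂⟩
      constructor
      · have : a * c ≤ a * x := by linarith
        exact le_of_mul_le_mul_left this ha
      · have : a * x < a * d := by linarith
        exact lt_of_mul_lt_mul_left this ha.le
  rw [h2]
  have h3 : (fun x : ℝ => a * x + b) ⁻¹' (A ∩ Set.Ico (a*c+b) (a*d+b))
      = (fun x : ℝ => a * x) ⁻¹' ((fun y : ℝ => y + b) ⁻¹' (A ∩ Set.Ico (a*c+b) (a*d+b))) := rfl
  rw [h3]
  have h4 : volume ((fun x : ℝ => a * x) ⁻¹' ((fun y : ℝ => y + b) ⁻¹' (A ∩ Set.Ico (a*c+b) (a*d+b))))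
      = ENNReal.ofReal |a⁻¹| * volume ((fun y : ℝ => y + b) ⁻¹' (A ∩ Set.Ico (a*c+b) (a*d+b))) :=
    Real.volume_preimage_mul_left (ne_of_gt ha) _
  rw [h4, measure_preimage_add_right volume b _, abs_of_pos (inv_pos.mpr ha)]

/-- (Example 2 of the paper.)  For any measurable probability function
`p` equal to `1/5` on `[0, 1/10)` and to `4/5` on `[1/10, 1/5]` (arbitrary elsewhere),
Lebesgue measure on `[0,1]` — the invariant density `f ≡ 1` of the selector
`𝝉(x) = 5x mod 1` — is invariant under the random map `R = {τ1, τ2; p, 1−p}`. -/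
theorem random_map_example2_preserves_lebesgue
    (p : ℝ → ℝ) (hpm : Measurable p)
    (hp01 : ∀ x ∈ Set.Icc (0:ℝ) 1, p x ∈ Set.Icc (0:ℝ) 1)
    (hp1 : ∀ x ∈ Set.Ico (0:ℝ) (1/10), p x = 1/5)
    (hp2 : ∀ x ∈ Set.Icc (1/10 : ℝ) (1/5), p x = 4/5) :
    RMInvariant tauLower tauUpper p leb01 := by
  intro A hA
  have hInd : Measurable (A.indicator (fun _ => (1:ℝ≥0∞))) := measurable_const.indicator hA
  set F : ℝ → ℝ≥0∞ := fun x =>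
    ENNReal.ofReal (p x) * A.indicator (fun _ => (1:ℝ≥0∞)) (tauLower x)
      + ENNReal.ofReal (1 - p x) * A.indicator (fun _ => (1:ℝ≥0∞)) (tauUpper x) with hF
  -- reduce to an integral over Ico 0 1
  have step0 : ∫⁻ x, F x ∂leb01 = ∫⁻ x in Set.Ico (0:ℝ) 1, F x ∂volume := by
    rw [leb01]
    exact (setLIntegral_congr (Ico_ae_eq_Icc (μ := volume) (a := (0:ℝ)) (b := 1))).symm
  -- split the interval
  have hu1 : Set.Ico (3/5:ℝ) (4/5) ∪ Set.Ico (4/5:ℝ) 1 = Set.Ico (3/5:ℝ) 1 :=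
    Set.Ico_union_Ico_eq_Ico (by norm_num) (by norm_num)
  have hu2 : Set.Ico (2/5:ℝ) (3/5) ∪ Set.Ico (3/5:ℝ) 1 = Set.Ico (2/5:ℝ) 1 :=
    Set.Ico_union_Ico_eq_Ico (by norm_num) (by norm_num)
  have hu3 : Set.Ico (1/5:ℝ) (2/5) ∪ Set.Ico (2/5:ℝ) 1 = Set.Ico (1/5:ℝ) 1 :=
    Set.Ico_union_Ico_eq_Ico (by norm_num) (by norm_num)
  have hu4 : Set.Ico (1/10:ℝ) (1/5) ∪ Set.Ico (1/5:ℝ) 1 = Set.Ico (1/10:ℝ) 1 :=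
    Set.Ico_union_Ico_eq_Ico (by norm_num) (by norm_num)
  have hu5 : Set.Ico (0:ℝ) (1/10) ∪ Set.Ico (1/10:ℝ) 1 = Set.Ico (0:ℝ) 1 :=
    Set.Ico_union_Ico_eq_Ico (by norm_num) (by norm_num)
  have hsplit : ∫⁻ x in Set.Ico (0:ℝ) 1, F x ∂volume
      = ∫⁻ x in Set.Ico (0:ℝ) (1/10), F x ∂volume
        + ∫⁻ x in Set.Ico (1/10:ℝ) (1/5), F x ∂volume
        + ∫⁻ x in Set.Ico (1/5:ℝ) (2/5), F x ∂volume
        + ∫⁻ x in Set.Ico (2/5:ℝ) (3/5), F x ∂volume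
        + ∫⁻ x in Set.Ico (3/5:ℝ) (4/5), F x ∂volume
        + ∫⁻ x in Set.Ico (4/5:ℝ) 1, F x ∂volume := by
    rw [← hu5, lintegral_union measurableSet_Ico (Set.Ico_disjoint_Ico_same),
      ← hu4, lintegral_union measurableSet_Ico (Set.Ico_disjoint_Ico_same),
      ← hu3, lintegral_union measurableSet_Ico (Set.Ico_disjoint_Ico_same),
      ← hu2, lintegral_union measurableSet_Ico (Set.Ico_disjoint_Ico_same),
      ← hu1, lintegral_union measurableSet_Ico (Set.Ico_disjoint_Ico_same)]
    ring
  -- measurable auxiliary functions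
  have hφ : ∀ a b : ℝ, Measurable fun x : ℝ => A.indicator (fun _ => (1:ℝ≥0∞)) (a * x + b) :=
    fun a b => hInd.comp (by fun_prop)
  -- piece on [0, 1/10)
  have p1 : ∫⁻ x in Set.Ico (0:ℝ) (1/10), F x ∂volume
      = ENNReal.ofReal (1/5) * (ENNReal.ofReal (2:ℝ)⁻¹ * volume (A ∩ Set.Ico (0:ℝ) (1/5)))
        + ENNReal.ofReal (4/5) * (ENNReal.ofReal (8:ℝ)⁻¹ * volume (A ∩ Set.Ico (0:ℝ) (4/5))) := by
    have hcong : ∫⁻ x in Set.Ico (0:ℝ) (1/10), F x ∂volume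
        = ∫⁻ x in Set.Ico (0:ℝ) (1/10),
            (ENNReal.ofReal (1/5) * A.indicator (fun _ => (1:ℝ≥0∞)) (2 * x + 0)
              + ENNReal.ofReal (4/5) * A.indicator (fun _ => (1:ℝ≥0∞)) (8 * x + 0)) ∂volume := by
      refine setLIntegral_congr_fun measurableSet_Ico (fun x hx => ?_)
      obtain ⟨hx0, hx1⟩ := hx
      have hx10 : x ≤ 1/10 := le_of_lt hx1
      have hp : p x = 1/5 := hp1 x ⟨hx0, hx1⟩
      simp only [hF, tauLower, tauUpper, if_pos hx10, hp]
      norm_num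
    rw [hcong, lintegral_add_left ((hφ 2 0).const_mul _), lintegral_const_mul _ (hφ 2 0),
      lintegral_const_mul _ (hφ 8 0), lint_affine hA 2 0 0 (1/10) (by norm_num),
      lint_affine hA 8 0 0 (1/10) (by norm_num)]
    norm_num
  -- piece on [1/10, 1/5)
  have p2 : ∫⁻ x in Set.Ico (1/10:ℝ) (1/5), F x ∂volume
      = ENNReal.ofReal (4/5) * (ENNReal.ofReal (8:ℝ)⁻¹ * volume (A ∩ Set.Ico (1/5:ℝ) 1))
        + ENNReal.ofReal (1/5) * (ENNReal.ofReal (2:ℝ)⁻¹ * volume (A ∩ Set.Ico (4/5:ℝ) 1)) := by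
    have hcong : ∫⁻ x in Set.Ico (1/10:ℝ) (1/5), F x ∂volume
        = ∫⁻ x in Set.Ico (1/10:ℝ) (1/5),
            (ENNReal.ofReal (4/5) * A.indicator (fun _ => (1:ℝ≥0∞)) (8 * x + (-(3/5)))
              + ENNReal.ofReal (1/5) * A.indicator (fun _ => (1:ℝ≥0∞)) (2 * x + 3/5)) ∂volume := by
      refine setLIntegral_congr_fun measurableSet_Ico (fun x hx => ?_)
      obtain ⟨hx0, hx1⟩ := hx
      have hp : p x = 4/5 := hp2 x ⟨hx0, le_of_lt hx1⟩
      have hL : tauLower x = 8 * x + (-(3/5)) := by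
        simp only [tauLower]
        by_cases h : x ≤ 1/10
        · have hx : x = 1/10 := le_antisymm h hx0
          rw [if_pos h, hx]; norm_num
        · rw [if_neg h, if_pos hx1]; ring
      have hU : tauUpper x = 2 * x + 3/5 := by
        simp only [tauUpper]
        by_cases h : x ≤ 1/10
        · have hx : x = 1/10 := le_antisymm h hx0
          rw [if_pos h, hx]; norm_num
        · rw [if_neg h, if_pos hx1]
      simp only [hF, hL, hU, hp]
      norm_num
    rw [hcong, lintegral_add_left ((hφ 8 (-(3/5))).const_mul _),
      lintegral_const_mul _ (hφ 8 (-(3/5))), lintegral_const_mul _ (hφ 2 (3/5)),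
      lint_affine hA 8 (-(3/5)) (1/10) (1/5) (by norm_num),
      lint_affine hA 2 (3/5) (1/10) (1/5) (by norm_num)]
    norm_num
  -- pieces where both maps agree with 5x mod 1
  have psingle : ∀ c d k : ℝ, 0 ≤ c → d ≤ 1 →
      (∀ x ∈ Set.Ico c d, tauLower x = 5 * x + k ∧ tauUpper x = 5 * x + k) →
      ∫⁻ x in Set.Ico c d, F x ∂volume
        = ENNReal.ofReal (5:ℝ)⁻¹ * volume (A ∩ Set.Ico (5*c+k) (5*d+k)) := by
    intro c d k hc hd hτ
    have hcong : ∫⁻ x in Set.Ico c d, F x ∂volume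
        = ∫⁻ x in Set.Ico c d, A.indicator (fun _ => (1:ℝ≥0∞)) (5 * x + k) ∂volume := by
      refine setLIntegral_congr_fun measurableSet_Ico (fun x hx => ?_)
      obtain ⟨hτ1, hτ2⟩ := hτ x hx
      have hx01 : x ∈ Set.Icc (0:ℝ) 1 := ⟨le_trans hc hx.1, le_trans hx.2.le hd⟩
      obtain ⟨hq0, hq1⟩ := hp01 x hx01
      simp only [hF, hτ1, hτ2]
      rw [← add_mul, ← ENNReal.ofReal_add hq0 (by linarith)]
      have : p x + (1 - p x) = 1 := by ring
      rw [this, ENNReal.ofReal_one, one_mul]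
    rw [hcong, lint_affine hA 5 k c d (by norm_num)]
  have p3 : ∫⁻ x in Set.Ico (1/5:ℝ) (2/5), F x ∂volume
      = ENNReal.ofReal (5:ℝ)⁻¹ * volume (A ∩ Set.Ico (0:ℝ) 1) := by
    have := psingle (1/5) (2/5) (-1) (by norm_num) (by norm_num) (fun x hx => by
      obtain ⟨h1, h2⟩ := hx
      constructor <;>
      · simp only [tauLower, tauUpper, fiveXmod1]
        rw [if_neg (by linarith), if_neg (by linarith), if_pos (by linarith)]
        ring)
    rw [this]; norm_num
  have p4 : ∫⁻ x in Set.Ico (2/5:ℝ) (3/5), F x ∂volume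
      = ENNReal.ofReal (5:ℝ)⁻¹ * volume (A ∩ Set.Ico (0:ℝ) 1) := by
    have := psingle (2/5) (3/5) (-2) (by norm_num) (by norm_num) (fun x hx => by
      obtain ⟨h1, h2⟩ := hx
      constructor <;>
      · simp only [tauLower, tauUpper, fiveXmod1]
        rw [if_neg (by linarith), if_neg (by linarith), if_neg (by linarith),
          if_pos (by linarith)]
        ring)
    rw [this]; norm_num
  have p5 : ∫⁻ x in Set.Ico (3/5:ℝ) (4/5), F x ∂volume
      = ENNReal.ofReal (5:ℝ)⁻¹ * volume (A ∩ Set.Ico (0:ℝ) 1) := by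
    have := psingle (3/5) (4/5) (-3) (by norm_num) (by norm_num) (fun x hx => by
      obtain ⟨h1, h2⟩ := hx
      constructor <;>
      · simp only [tauLower, tauUpper, fiveXmod1]
        rw [if_neg (by linarith), if_neg (by linarith), if_neg (by linarith),
          if_neg (by linarith), if_pos (by linarith)]
        ring)
    rw [this]; norm_num
  have p6 : ∫⁻ x in Set.Ico (4/5:ℝ) 1, F x ∂volume
      = ENNReal.ofReal (5:ℝ)⁻¹ * volume (A ∩ Set.Ico (0:ℝ) 1) := by
    have := psingle (4/5) 1 (-4) (by norm_num) (by norm_num) (fun x hx => by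
      obtain ⟨h1, h2⟩ := hx
      constructor <;>
      · simp only [tauLower, tauUpper, fiveXmod1]
        rw [if_neg (by linarith), if_neg (by linarith), if_neg (by linarith),
          if_neg (by linarith), if_neg (by linarith)]
        ring)
    rw [this]; norm_num
  -- left-hand side
  have hleb : leb01 A = volume (A ∩ Set.Ico (0:ℝ) 1) := by
    rw [leb01, Measure.restrict_apply hA]
    exact measure_congr (MeasureTheory.ae_eq_set_inter (ae_eq_refl A)
      (Ico_ae_eq_Icc (μ := volume) (a := (0:ℝ)) (b := 1)).symm)
  -- combining measures
  have hV1 : volume (A ∩ Set.Ico (0:ℝ) (1/5)) + volume (A ∩ Set.Ico (1/5:ℝ) 1)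
      = volume (A ∩ Set.Ico (0:ℝ) 1) := by
    rw [← measure_union (Set.Ico_disjoint_Ico_same.mono Set.inter_subset_right
      Set.inter_subset_right) (hA.inter measurableSet_Ico)]
    rw [← Set.inter_union_distrib_left, Set.Ico_union_Ico_eq_Ico (by norm_num) (by norm_num)]
  have hV2 : volume (A ∩ Set.Ico (0:ℝ) (4/5)) + volume (A ∩ Set.Ico (4/5:ℝ) 1)
      = volume (A ∩ Set.Ico (0:ℝ) 1) := by
    rw [← measure_union (Set.Ico_disjoint_Ico_same.mono Set.inter_subset_right
      Set.inter_subset_right) (hA.inter measurableSet_Ico)]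
    rw [← Set.inter_union_distrib_left, Set.Ico_union_Ico_eq_Ico (by norm_num) (by norm_num)]
  rw [step0, hsplit, p1, p2, p3, p4, p5, p6, hleb]
  have c1 : ∀ x : ℝ≥0∞, ENNReal.ofReal (1/5) * (ENNReal.ofReal (2:ℝ)⁻¹ * x)
      = ENNReal.ofReal (1/10) * x := fun x => by
    rw [← mul_assoc, ← ENNReal.ofReal_mul (by norm_num)]; norm_num
  have c2 : ∀ x : ℝ≥0∞, ENNReal.ofReal (4/5) * (ENNReal.ofReal (8:ℝ)⁻¹ * x)
      = ENNReal.ofReal (1/10) * x := fun x => by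
    rw [← mul_assoc, ← ENNReal.ofReal_mul (by norm_num)]; norm_num
  rw [c1, c2, c2, c1]
  calc volume (A ∩ Set.Ico (0:ℝ) 1)
      = (ENNReal.ofReal (1/10) + ENNReal.ofReal (1/10) + ENNReal.ofReal (5:ℝ)⁻¹
          + ENNReal.ofReal (5:ℝ)⁻¹ + ENNReal.ofReal (5:ℝ)⁻¹ + ENNReal.ofReal (5:ℝ)⁻¹)
          * volume (A ∩ Set.Ico (0:ℝ) 1) := by
        rw [← ENNReal.ofReal_add (by norm_num) (by norm_num),
          ← ENNReal.ofReal_add (by norm_num) (by norm_num),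
          ← ENNReal.ofReal_add (by norm_num) (by norm_num),
          ← ENNReal.ofReal_add (by norm_num) (by norm_num),
          ← ENNReal.ofReal_add (by norm_num) (by norm_num)]
        norm_num
    _ = ENNReal.ofReal (1/10) * (volume (A ∩ Set.Ico (0:ℝ) (1/5))
          + volume (A ∩ Set.Ico (1/5:ℝ) 1))
        + ENNReal.ofReal (1/10) * (volume (A ∩ Set.Ico (0:ℝ) (4/5))
          + volume (A ∩ Set.Ico (4/5:ℝ) 1))
        + ENNReal.ofReal (5:ℝ)⁻¹ * volume (A ∩ Set.Ico (0:ℝ) 1)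
        + ENNReal.ofReal (5:ℝ)⁻¹ * volume (A ∩ Set.Ico (0:ℝ) 1)
        + ENNReal.ofReal (5:ℝ)⁻¹ * volume (A ∩ Set.Ico (0:ℝ) 1)
        + ENNReal.ofReal (5:ℝ)⁻¹ * volume (A ∩ Set.Ico (0:ℝ) 1) := by
        rw [hV1, hV2]; ring
    _ = _ := by ring
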